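/- Let G be a connected graph with principal eigenvector x, let u and v be two vertices with x_v ≥ x_u, and let S be a nonempty subset of N(u) \ (N(v) ∪ {v}). Then the graph G' obtained by deleting all edges wu for w ∈ S and adding all edges wv for w ∈ S satisfies λ₁(G') > λ₁(G). -/

import Mathlib

open Finset Matrix

open Module.End ContinuousLinearMap RealInnerProductSpace in
private lemma quad_le_sSup {V : Type*} [Fintype V] [DecidableEq V] [Nonempty V]
    (A : Matrix V V ℝ) (hA : A.IsHermitian) (y : V → ℝ) (hy : ∑ i, y i ^ 2 = 1) :
    (y ⬝ᵥ (A *ᵥ y) ≤ sSup {μ : ℝ | Module.End.HasEigenvalue (Matrix.toLin' A) μ}) ∧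
    (y ⬝ᵥ (A *ᵥ y) = sSup {μ : ℝ | Module.End.HasEigenvalue (Matrix.toLin' A) μ} →
      A *ᵥ y = (sSup {μ : ℝ | Module.End.HasEigenvalue (Matrix.toLin' A) μ}) • y) := by
  classical
  set T : EuclideanSpace ℝ V →L[ℝ] EuclideanSpace ℝ V :=
    LinearMap.toContinuousLinearMap (Matrix.toEuclideanLin A) with hT
  have hsymm : (T : EuclideanSpace ℝ V →ₗ[ℝ] EuclideanSpace ℝ V).IsSymmetric := by
    rw [hT, LinearMap.coe_toContinuousLinearMap]
    exact Matrix.isHermitian_iff_isSymmetric.mp hA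
  have hTapp : ∀ z : V → ℝ,
      T ((WithLp.equiv 2 (V → ℝ)).symm z) = (WithLp.equiv 2 (V → ℝ)).symm (A *ᵥ z) :=
    fun z => rfl
  have hre : ∀ z : EuclideanSpace ℝ V, T.reApplyInnerSelf z = ⟪T z, z⟫ := fun z => rfl
  have hbdd : BddAbove (Set.range fun z : {z : EuclideanSpace ℝ V // z ≠ 0} =>
      T.rayleighQuotient z) := by
    refine ⟨‖T‖, ?_⟩
    rintro _ ⟨⟨z, hz⟩, rfl⟩
    have hz' : (0:ℝ) < ‖z‖ := norm_pos_iff.mpr hz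
    have h1 : ⟪T z, z⟫ ≤ ‖T‖ * ‖z‖ ^ 2 := by
      calc ⟪T z, z⟫ ≤ ‖T z‖ * ‖z‖ := real_inner_le_norm _ _
        _ ≤ (‖T‖ * ‖z‖) * ‖z‖ := by
            have := T.le_opNorm z
            nlinarith [norm_nonneg z]
        _ = ‖T‖ * ‖z‖ ^ 2 := by ring
    show T.reApplyInnerSelf z / ‖z‖ ^ 2 ≤ ‖T‖
    rw [hre, div_le_iff₀ (by positivity)]
    linarith
  set r := ⨆ z : {z : EuclideanSpace ℝ V // z ≠ 0}, T.rayleighQuotient z with hr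
  have hgr : IsGreatest {μ : ℝ | Module.End.HasEigenvalue (Matrix.toLin' A) μ} r := by
    constructor
    · have hev : Module.End.HasEigenvalue
          (T : EuclideanSpace ℝ V →ₗ[ℝ] EuclideanSpace ℝ V) r := by
        exact hsymm.hasEigenvalue_iSup_of_finiteDimensional
      obtain ⟨z, hz⟩ := hev.exists_hasEigenvector
      have hz2 : T z = r • z := hz.apply_eq_smul
      set w := WithLp.equiv 2 (V → ℝ) z with hw
      have hzw : z = (WithLp.equiv 2 (V → ℝ)).symm w := rfl
      have hwne : w ≠ 0 := by
        intro h
        apply hz.right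
        rw [hzw, h]; rfl
      have hAw : A *ᵥ w = r • w := by
        have := hz2
        rw [hzw, hTapp] at this
        have := congrArg (WithLp.equiv 2 (V → ℝ)) this
        simpa [WithLp.ofLp_smul] using this
      exact Module.End.hasEigenvalue_of_hasEigenvector
        ⟨Module.End.mem_eigenspace_iff.mpr (by rw [Matrix.toLin'_apply]; exact hAw), hwne⟩
    · rintro μ hμ
      obtain ⟨w, hw⟩ := (Module.End.HasEigenvalue.exists_hasEigenvector hμ)
      have hAw : A *ᵥ w = μ • w := by
        have := hw.apply_eq_smul
        rwa [Matrix.toLin'_apply] at this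
      set z : EuclideanSpace ℝ V := (WithLp.equiv 2 (V → ℝ)).symm w with hz
      have hzne : z ≠ 0 := by
        intro h
        apply hw.right
        have := congrArg (WithLp.equiv 2 (V → ℝ)) h
        simpa [hz] using this
      have hray : T.rayleighQuotient z = μ := by
        show T.reApplyInnerSelf z / ‖z‖ ^ 2 = μ
        rw [hre, hz, hTapp, hAw]
        have h0 : (0:ℝ) < ‖z‖ := norm_pos_iff.mpr hzne
        rw [show (WithLp.equiv 2 (V → ℝ)).symm (μ • w) = μ • (WithLp.equiv 2 (V → ℝ)).symm w from rfl]
        rw [real_inner_smul_left]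
        rw [real_inner_self_eq_norm_sq]
        field_simp
        exact mul_div_cancel_right₀ μ (ne_of_gt h0)
      calc μ = T.rayleighQuotient z := hray.symm
        _ ≤ r := le_ciSup hbdd ⟨z, hzne⟩
  have hLr : sSup {μ : ℝ | Module.End.HasEigenvalue (Matrix.toLin' A) μ} = r :=
    hgr.csSup_eq
  set Y : EuclideanSpace ℝ V := (WithLp.equiv 2 (V → ℝ)).symm y with hY
  have hYnorm : ‖Y‖ = 1 := by
    rw [EuclideanSpace.norm_eq]
    have : ∀ i, ‖Y i‖ ^ 2 = y i ^ 2 := fun i => by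
      rw [Real.norm_eq_abs, sq_abs]; rfl
    simp_rw [this, hy, Real.sqrt_one]
  have hYne : Y ≠ 0 := by
    intro h
    rw [h] at hYnorm
    simp at hYnorm
  have hquad : ⟪T Y, Y⟫ = y ⬝ᵥ (A *ᵥ y) := by
    rw [hY, hTapp]
    rw [dotProduct_comm]
    simp [PiLp.inner_apply, RCLike.inner_apply, dotProduct]
    exact Finset.sum_congr rfl fun i _ => mul_comm _ _
  have hrayY : T.rayleighQuotient Y = y ⬝ᵥ (A *ᵥ y) := by
    show T.reApplyInnerSelf Y / ‖Y‖ ^ 2 = _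
    rw [hre, hquad, hYnorm]; norm_num
  have hle : y ⬝ᵥ (A *ᵥ y) ≤ r := by
    rw [← hrayY]; exact le_ciSup hbdd ⟨Y, hYne⟩
  refine ⟨by rw [hLr]; exact hle, ?_⟩
  intro heq
  rw [hLr] at heq ⊢
  have hmax : IsMaxOn T.reApplyInnerSelf (Metric.sphere (0 : EuclideanSpace ℝ V) ‖Y‖) Y := by
    intro z hz
    have hzn : ‖z‖ = 1 := by
      have := Metric.mem_sphere.mp hz
      rwa [dist_zero_right, hYnorm] at this
    have hzne : z ≠ 0 := by intro h; rw [h] at hzn; simp at hzn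
    have h1 : T.rayleighQuotient z ≤ r := le_ciSup hbdd ⟨z, hzne⟩
    have h2 : T.rayleighQuotient z = T.reApplyInnerSelf z := by
      show T.reApplyInnerSelf z / ‖z‖ ^ 2 = _
      rw [hzn]; norm_num
    show T.reApplyInnerSelf z ≤ T.reApplyInnerSelf Y
    rw [hre Y, hquad, heq]
    rw [← h2]; exact h1
  have hsa : IsSelfAdjoint T := ContinuousLinearMap.isSelfAdjoint_iff_isSymmetric.mpr hsymm
  have hvec := hsa.hasEigenvector_of_isMaxOn hYne hmax
  have hTY : T Y = r • Y := by
    have := hvec.apply_eq_smul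
    simpa using this
  rw [hY, hTapp] at hTY
  have := congrArg (WithLp.equiv 2 (V → ℝ)) hTY
  rw [← heq] at this ⊢
  simpa [WithLp.ofLp_smul] using this

private lemma indicator_calc (c0 adj q1 q2 p1 p2 : Prop) [Decidable c0] [Decidable adj]
    [Decidable q1] [Decidable q2] [Decidable p1] [Decidable p2]
    (hc0 : c0 ↔ ((adj ∧ ¬(p1 ∨ p2)) ∨ q1 ∨ q2))
    (k1 : p1 → adj) (k2 : p2 → adj) (k3 : q1 → ¬adj) (k4 : q2 → ¬adj)
    (k12 : ¬(p1 ∧ p2)) (k13 : ¬(p1 ∧ q1)) (k14 : ¬(p1 ∧ q2))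
    (k23 : ¬(p2 ∧ q1)) (k24 : ¬(p2 ∧ q2)) (k34 : ¬(q1 ∧ q2)) :
    (if c0 then (1:ℝ) else 0) = (if adj then 1 else 0)
      + ((if q1 then 1 else 0) + (if q2 then 1 else 0))
      - ((if p1 then 1 else 0) + (if p2 then 1 else 0)) := by
  by_cases hp1 : p1
  · have ha := k1 hp1
    have n1 : ¬q1 := fun h => k13 ⟨hp1, h⟩
    have n2 : ¬q2 := fun h => k14 ⟨hp1, h⟩
    have n3 : ¬p2 := fun h => k12 ⟨hp1, h⟩
    have hc : ¬c0 := fun h => by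
      rcases hc0.mp h with ⟨-, hn⟩ | h | h
      exacts [hn (Or.inl hp1), n1 h, n2 h]
    rw [if_neg hc, if_pos ha, if_neg n1, if_neg n2, if_pos hp1, if_neg n3]; norm_num
  · by_cases hp2 : p2
    · have ha := k2 hp2
      have n1 : ¬q1 := fun h => k23 ⟨hp2, h⟩
      have n2 : ¬q2 := fun h => k24 ⟨hp2, h⟩
      have hc : ¬c0 := fun h => by
        rcases hc0.mp h with ⟨-, hn⟩ | h | h
        exacts [hn (Or.inr hp2), n1 h, n2 h]
      rw [if_neg hc, if_pos ha, if_neg n1, if_neg n2, if_neg hp1, if_pos hp2]; norm_num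
    · by_cases hq1 : q1
      · have ha := k3 hq1
        have n2 : ¬q2 := fun h => k34 ⟨hq1, h⟩
        have hc : c0 := hc0.mpr (Or.inr (Or.inl hq1))
        rw [if_pos hc, if_neg ha, if_pos hq1, if_neg n2, if_neg hp1, if_neg hp2]; norm_num
      · by_cases hq2 : q2
        · have ha := k4 hq2
          have hc : c0 := hc0.mpr (Or.inr (Or.inr hq2))
          rw [if_pos hc, if_neg ha, if_neg hq1, if_pos hq2, if_neg hp1, if_neg hp2]; norm_num
        · have hciff : c0 ↔ adj := by
            rw [hc0]
            constructor
            · rintro (⟨h, -⟩ | h | h)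
              exacts [h, absurd h hq1, absurd h hq2]
            · intro h
              exact Or.inl ⟨h, fun hh => hh.elim hp1 hp2⟩
          by_cases ha : adj
          · rw [if_pos (hciff.mpr ha), if_pos ha, if_neg hq1, if_neg hq2, if_neg hp1,
              if_neg hp2]; norm_num
          · rw [if_neg (fun h => ha (hciff.mp h)), if_neg ha, if_neg hq1, if_neg hq2,
              if_neg hp1, if_neg hp2]; norm_num

/-- The spectral radius (largest adjacency eigenvalue) of a finite simple graph. -/
noncomputable def lam1 {V : Type*} [Fintype V] [DecidableEq V] (G : SimpleGraph V) : ℝ := by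
  classical
  exact sSup {μ : ℝ | Module.End.HasEigenvalue (Matrix.toLin' (G.adjMatrix ℝ)) μ}

theorem stmt_4 {V : Type*} [Fintype V] [DecidableEq V] (G : SimpleGraph V)
    [DecidableRel G.Adj] (hconn : G.Connected) (x : V → ℝ)
    (hpos : ∀ w, 0 < x w)
    (hunit : ∑ v, x v ^ 2 = 1)
    (heig : G.adjMatrix ℝ *ᵥ x = lam1 G • x)
    (u v : V) (hxvu : x u ≤ x v)
    (S : Set V) (hS : S.Nonempty)
    (hSsub : S ⊆ G.neighborSet u \ (G.neighborSet v ∪ {v})) :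
    lam1 (SimpleGraph.fromEdgeSet
      ((G.edgeSet \ {e | ∃ w ∈ S, e = s(w, u)}) ∪ {e | ∃ w ∈ S, e = s(w, v)}))
      > lam1 G := by
  classical
  haveI : Nonempty V := ⟨u⟩
  set G' := SimpleGraph.fromEdgeSet
      ((G.edgeSet \ {e | ∃ w ∈ S, e = s(w, u)}) ∪ {e | ∃ w ∈ S, e = s(w, v)}) with hG'
  -- basic facts about S
  have f2 : ∀ w ∈ S, G.Adj u w := fun w hw => (hSsub hw).1
  have f3 : ∀ w ∈ S, ¬ G.Adj v w := fun w hw h => (hSsub hw).2 (Or.inl h)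
  have f4 : ∀ w ∈ S, w ≠ v := fun w hw h => (hSsub hw).2 (Or.inr h)
  have f1 : u ∉ S := fun h => (G.loopless.irrefl u) (f2 u h)
  have f5 : u ≠ v := by
    obtain ⟨w, hw⟩ := hS
    intro h
    exact f3 w hw (h ▸ f2 w hw)
  have f6 : v ∉ S := fun h => f4 v h rfl
  -- membership characterization
  have hmem : ∀ a b c : V, (s(a,b) ∈ {e : Sym2 V | ∃ w ∈ S, e = s(w, c)}) ↔
      ((a ∈ S ∧ b = c) ∨ (b ∈ S ∧ a = c)) := by
    intro a b c
    simp only [Set.mem_setOf_eq]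
    constructor
    · rintro ⟨w, hw, h⟩
      rw [Sym2.eq_iff] at h
      rcases h with ⟨rfl, rfl⟩ | ⟨rfl, rfl⟩
      · exact Or.inl ⟨hw, rfl⟩
      · exact Or.inr ⟨hw, rfl⟩
    · rintro (⟨h1, rfl⟩ | ⟨h1, rfl⟩)
      · exact ⟨a, h1, by rw [Sym2.eq_iff]; tauto⟩
      · exact ⟨b, h1, by rw [Sym2.eq_iff]; tauto⟩
  -- adjacency characterization of G'
  have hadj' : ∀ a b, G'.Adj a b ↔
      ((G.Adj a b ∧ ¬((a ∈ S ∧ b = u) ∨ (b ∈ S ∧ a = u))) ∨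
        ((a ∈ S ∧ b = v) ∨ (b ∈ S ∧ a = v))) := by
    intro a b
    rw [hG', SimpleGraph.fromEdgeSet_adj, Set.mem_union, Set.mem_diff,
      SimpleGraph.mem_edgeSet, hmem a b u, hmem a b v]
    constructor
    · rintro ⟨h, -⟩; exact h
    · intro h
      refine ⟨h, ?_⟩
      rcases h with ⟨hadj, -⟩ | (⟨hw, rfl⟩ | ⟨hw, rfl⟩)
      · exact hadj.ne
      · exact f4 a hw
      · exact fun hh => f4 b hw hh.symm
  set A : Matrix V V ℝ := G.adjMatrix ℝ with hA
  set A' : Matrix V V ℝ := G'.adjMatrix ℝ with hA'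
  -- entrywise description of A'
  have hentry : ∀ a b, A' a b = A a b
      + ((if a ∈ S ∧ b = v then (1:ℝ) else 0) + (if b ∈ S ∧ a = v then 1 else 0))
      - ((if a ∈ S ∧ b = u then 1 else 0) + (if b ∈ S ∧ a = u then 1 else 0)) := by
    intro a b
    have k1 : (a ∈ S ∧ b = u) → G.Adj a b := fun ⟨h, e⟩ => e ▸ (f2 a h).symm
    have k2 : (b ∈ S ∧ a = u) → G.Adj a b := fun ⟨h, e⟩ => e ▸ (f2 b h)
    have k3 : (a ∈ S ∧ b = v) → ¬ G.Adj a b := fun ⟨h, e⟩ hadj => f3 a h (e ▸ hadj).symm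
    have k4 : (b ∈ S ∧ a = v) → ¬ G.Adj a b := fun ⟨h, e⟩ hadj => f3 b h (e ▸ hadj)
    have k12 : ¬((a ∈ S ∧ b = u) ∧ (b ∈ S ∧ a = u)) := fun ⟨⟨h, _⟩, ⟨_, e⟩⟩ => f1 (e ▸ h)
    have k13 : ¬((a ∈ S ∧ b = u) ∧ (a ∈ S ∧ b = v)) := fun ⟨⟨_, e1⟩, ⟨_, e2⟩⟩ =>
      f5 (e1 ▸ e2)
    have k14 : ¬((a ∈ S ∧ b = u) ∧ (b ∈ S ∧ a = v)) := fun ⟨⟨h, _⟩, ⟨_, e⟩⟩ => f4 a h e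
    have k23 : ¬((b ∈ S ∧ a = u) ∧ (a ∈ S ∧ b = v)) := fun ⟨⟨_, e⟩, ⟨h, _⟩⟩ => f1 (e ▸ h)
    have k24 : ¬((b ∈ S ∧ a = u) ∧ (b ∈ S ∧ a = v)) := fun ⟨⟨_, e1⟩, ⟨_, e2⟩⟩ =>
      f5 (e1 ▸ e2)
    have k34 : ¬((a ∈ S ∧ b = v) ∧ (b ∈ S ∧ a = v)) := fun ⟨⟨_, e⟩, ⟨h, _⟩⟩ => f4 b h e
    rw [hA', hA]
    simp only [SimpleGraph.adjMatrix_apply]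
    exact indicator_calc _ _ _ _ _ _ (hadj' a b) k1 k2 k3 k4 k12 k13 k14 k23 k24 k34
  -- sums over indicators
  set s : ℝ := ∑ w ∈ Finset.univ.filter (· ∈ S), x w with hs
  have hspos : 0 < s := by
    obtain ⟨w0, hw0⟩ := hS
    refine Finset.sum_pos (fun i _ => hpos i) ⟨w0, ?_⟩
    simp [hw0]
  have hsum1 : ∀ (P : Prop) [Decidable P] (c : V),
      ∑ b, (if P ∧ b = c then (1:ℝ) else 0) * x b = if P then x c else 0 := by
    intro P _ c
    by_cases hP : P
    · simp [hP]
    · simp [hP]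
  have hsum2 : ∀ (Q : Prop) [Decidable Q],
      ∑ b, (if b ∈ S ∧ Q then (1:ℝ) else 0) * x b = if Q then s else 0 := by
    intro Q _
    by_cases hQ : Q
    · simp only [hQ, and_true, if_true]
      rw [hs, Finset.sum_filter]
      exact Finset.sum_congr rfl fun b _ => by split_ifs <;> ring
    · simp [hQ]
  have hmulrow : ∀ a, (A' *ᵥ x) a = (A *ᵥ x) a
      + ((if a ∈ S then x v else 0) + (if a = v then s else 0))
      - ((if a ∈ S then x u else 0) + (if a = u then s else 0)) := by
    intro a
    simp only [Matrix.mulVec, dotProduct]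
    calc ∑ b, A' a b * x b
        = ∑ b, (A a b * x b
          + ((if a ∈ S ∧ b = v then (1:ℝ) else 0) * x b
            + (if b ∈ S ∧ a = v then (1:ℝ) else 0) * x b)
          - ((if a ∈ S ∧ b = u then (1:ℝ) else 0) * x b
            + (if b ∈ S ∧ a = u then (1:ℝ) else 0) * x b)) := by
          refine Finset.sum_congr rfl fun b _ => ?_
          rw [hentry a b]; ring
      _ = _ := by
          rw [Finset.sum_sub_distrib, Finset.sum_add_distrib, Finset.sum_add_distrib,
            Finset.sum_add_distrib, hsum1 (a ∈ S) v, hsum2 (a = v), hsum1 (a ∈ S) u,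
            hsum2 (a = u)]
  have hquad : x ⬝ᵥ (A' *ᵥ x) = x ⬝ᵥ (A *ᵥ x) + 2 * (x v - x u) * s := by
    simp only [dotProduct]
    have e1 : ∀ c : V, ∑ a, (if a ∈ S then x a * x c else 0) = s * x c := by
      intro c
      rw [hs, Finset.sum_filter, Finset.sum_mul]
      exact Finset.sum_congr rfl fun a _ => by split_ifs <;> ring
    have e2 : ∀ c : V, ∑ a, (if a = c then x a * s else 0) = x c * s := by
      intro c; simp
    calc ∑ a, x a * (A' *ᵥ x) a
        = ∑ a, (x a * (A *ᵥ x) a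
          + ((if a ∈ S then x a * x v else 0) + (if a = v then x a * s else 0))
          - ((if a ∈ S then x a * x u else 0) + (if a = u then x a * s else 0))) := by
          refine Finset.sum_congr rfl fun a _ => ?_
          rw [hmulrow a]
          split_ifs <;> ring
      _ = ∑ a, x a * (A *ᵥ x) a + ((s * x v + x v * s) - (s * x u + x u * s)) := by
          rw [Finset.sum_sub_distrib, Finset.sum_add_distrib, Finset.sum_add_distrib,
            Finset.sum_add_distrib, e1 v, e2 v, e1 u, e2 u]
          ring
      _ = _ := by ring
  have hherm : A'.IsHermitian := by
    show A'ᴴ = A'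
    ext a b
    simp only [Matrix.conjTranspose_apply, hA', SimpleGraph.adjMatrix_apply, star_trivial]
    exact if_congr (G'.adj_comm b a) rfl rfl
  set L' := sSup {μ : ℝ | Module.End.HasEigenvalue (Matrix.toLin' A') μ} with hL'
  obtain ⟨hle, hcase⟩ := quad_le_sSup A' hherm x hunit
  have hlam' : lam1 G' = L' := by rw [hL', hA']; unfold lam1; congr!
  have quadA : x ⬝ᵥ (A *ᵥ x) = lam1 G := by
    rw [heig]
    have : x ⬝ᵥ (lam1 G • x) = lam1 G * ∑ i, x i ^ 2 := by
      simp only [dotProduct, Pi.smul_apply, smul_eq_mul, Finset.mul_sum]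
      exact Finset.sum_congr rfl fun i _ => by ring
    rw [this, hunit, mul_one]
  rw [hlam']
  by_contra hcon
  push_neg at hcon
  have h1 : lam1 G + 2 * (x v - x u) * s ≤ L' := by
    rw [← quadA, ← hquad]; exact hle
  have hd : 0 ≤ 2 * (x v - x u) * s := by nlinarith
  have hL'eq : L' = lam1 G := le_antisymm hcon (by linarith)
  have hquadeq : x ⬝ᵥ (A' *ᵥ x) = L' := by
    rw [hquad, quadA, hL'eq]
    linarith
  have heigvec := hcase hquadeq
  have hv : (A' *ᵥ x) v = L' * x v := by rw [heigvec]; rfl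
  rw [hmulrow v] at hv
  have hAv : (A *ᵥ x) v = lam1 G * x v := by rw [heig]; simp
  rw [hAv, if_neg f6, if_pos rfl, if_neg f6, if_neg (fun h => f5 h.symm)] at hv
  rw [hL'eq] at hv
  linarith
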